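/- Let k ≥ 2 and let χ1,…,χk be primitive characters mod 8 such that χ1⋯χk is also primitive mod 8. Let ℓ denote the number of indices 1 ≤ i ≤ k with χ_i(−1) = −1. Then J(χ1,…,χk,2^3) = 2^{3(k−1)/2} · (−1)^{⌊ℓ/2⌋}. -/

import Mathlib

open Complex

/-- The generalized Jacobi sum `J_B(χ₁,…,χ_k, q)`; `J(χ₁,…,χ_k,q) = J_1`. -/
noncomputable def Jsum {q : ℕ} [NeZero q] {k : ℕ}
    (χ : Fin k → DirichletCharacter ℂ q) (B : ZMod q) : ℂ :=
  ∑ x : Fin k → ZMod q, if (∑ i, x i) = B then ∏ i, χ i (x i) else 0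


section JacobiAux
open Finset

noncomputable def jr : ℂ := ((Real.sqrt 2 : ℝ) : ℂ)
noncomputable def jzeta : ℂ := (1 + I) / jr
noncomputable def e8 (x : ZMod 8) : ℂ := jzeta ^ x.val

lemma jrt2_sq : jr ^ 2 = 2 := by
  rw [jr]
  have : (Real.sqrt 2) ^ 2 = 2 := Real.sq_sqrt (by norm_num)
  norm_cast
lemma jrt2_ne : jr ≠ 0 := by
  rw [jr]
  simp [Real.sqrt_eq_zero']

lemma jzeta_sq : jzeta ^ 2 = I := by
  rw [jzeta, div_pow, jrt2_sq]
  have : (1 + I) ^ 2 = 2 * I := by ring_nf; rw [I_sq]; ring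
  rw [this]
  field_simp
lemma jzeta4 : jzeta ^ 4 = -1 := by
  have : jzeta ^ 4 = (jzeta ^ 2) ^ 2 := by ring
  rw [this, jzeta_sq, I_sq]
lemma jzeta8 : jzeta ^ 8 = 1 := by
  have : jzeta ^ 8 = (jzeta ^ 4) ^ 2 := by ring
  rw [this, jzeta4]; ring

lemma sum8 (f : ZMod 8 → ℂ) : ∑ t : ZMod 8, f t = f 0 + f 1 + f 2 + f 3 + f 4 + f 5 + f 6 + f 7 := by
  show ∑ t : Fin 8, f t = _
  exact Fin.sum_univ_eight f

lemma e8_nat (n : ℕ) : e8 (n : ZMod 8) = jzeta ^ n := by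
  rw [e8, ZMod.val_natCast]
  conv_rhs => rw [← Nat.div_add_mod n 8, pow_add, pow_mul, jzeta8, one_pow, one_mul]

lemma e8_add (a b : ZMod 8) : e8 (a + b) = e8 a * e8 b := by
  have h : ((a.val + b.val : ℕ) : ZMod 8) = a + b := by
    push_cast [ZMod.natCast_val]
    simp [ZMod.cast_id]
  rw [← h, e8_nat, pow_add, e8, e8]

lemma e8_finsetSum {α : Type*} (s : Finset α) (f : α → ZMod 8) :
    e8 (∑ i ∈ s, f i) = ∏ i ∈ s, e8 (f i) := by
  classical
  induction s using Finset.induction_on with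
  | empty => show jzeta ^ (0 : ZMod 8).val = 1; norm_num [show (0 : ZMod 8).val = 0 from rfl]
  | @insert a s h ih => rw [Finset.sum_insert h, Finset.prod_insert h, e8_add, ih]

lemma orth (d : ZMod 8) : ∑ t : ZMod 8, e8 (t * d) = if d = 0 then 8 else 0 := by
  have hd : d = 0 ∨ d = 1 ∨ d = 2 ∨ d = 3 ∨ d = 4 ∨ d = 5 ∨ d = 6 ∨ d = 7 := by
    revert d; decide
  rcases hd with rfl|rfl|rfl|rfl|rfl|rfl|rfl|rfl
  · rw [if_pos rfl, sum8 (fun t => e8 (t * 0))]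
    show jzeta^0 + jzeta^0 + jzeta^0 + jzeta^0 + jzeta^0 + jzeta^0 + jzeta^0 + jzeta^0 = 8
    norm_num
  · rw [if_neg (by decide), sum8 (fun t => e8 (t * 1))]
    show jzeta^0 + jzeta^1 + jzeta^2 + jzeta^3 + jzeta^4 + jzeta^5 + jzeta^6 + jzeta^7 = 0
    linear_combination (1 + jzeta + jzeta^2 + jzeta^3) * jzeta4
  · rw [if_neg (by decide), sum8 (fun t => e8 (t * 2))]
    show jzeta^0 + jzeta^2 + jzeta^4 + jzeta^6 + jzeta^0 + jzeta^2 + jzeta^4 + jzeta^6 = 0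
    linear_combination (2 + 2*jzeta^2) * jzeta4
  · rw [if_neg (by decide), sum8 (fun t => e8 (t * 3))]
    show jzeta^0 + jzeta^3 + jzeta^6 + jzeta^1 + jzeta^4 + jzeta^7 + jzeta^2 + jzeta^5 = 0
    linear_combination (1 + jzeta + jzeta^2 + jzeta^3) * jzeta4
  · rw [if_neg (by decide), sum8 (fun t => e8 (t * 4))]
    show jzeta^0 + jzeta^4 + jzeta^0 + jzeta^4 + jzeta^0 + jzeta^4 + jzeta^0 + jzeta^4 = 0
    linear_combination (4 : ℂ) * jzeta4
  · rw [if_neg (by decide), sum8 (fun t => e8 (t * 5))]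
    show jzeta^0 + jzeta^5 + jzeta^2 + jzeta^7 + jzeta^4 + jzeta^1 + jzeta^6 + jzeta^3 = 0
    linear_combination (1 + jzeta + jzeta^2 + jzeta^3) * jzeta4
  · rw [if_neg (by decide), sum8 (fun t => e8 (t * 6))]
    show jzeta^0 + jzeta^6 + jzeta^4 + jzeta^2 + jzeta^0 + jzeta^6 + jzeta^4 + jzeta^2 = 0
    linear_combination (2 + 2*jzeta^2) * jzeta4
  · rw [if_neg (by decide), sum8 (fun t => e8 (t * 7))]
    show jzeta^0 + jzeta^7 + jzeta^6 + jzeta^5 + jzeta^4 + jzeta^3 + jzeta^2 + jzeta^1 = 0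
    linear_combination (1 + jzeta + jzeta^2 + jzeta^3) * jzeta4

lemma Gexp (ψ : DirichletCharacter ℂ 8) (h5 : ψ 5 = -1) (t : ZMod 8) :
    (∑ y : ZMod 8, ψ y * e8 (t * y)) =
      e8 t - ψ 7 * e8 (t*3) - e8 (t*5) + ψ 7 * e8 (t*7) := by
  have h0 : ψ 0 = 0 := ψ.map_nonunit (by decide)
  have h2 : ψ 2 = 0 := ψ.map_nonunit (by decide)
  have h4 : ψ 4 = 0 := ψ.map_nonunit (by decide)
  have h6 : ψ 6 = 0 := ψ.map_nonunit (by decide)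
  have h1 : ψ 1 = 1 := map_one ψ
  have h3 : ψ 3 = -ψ 7 := by
    have : ψ 5 * ψ 7 = ψ 3 := by
      rw [← map_mul, show ((5:ZMod 8) * 7) = 3 from by decide]
    rw [← this, h5]; ring
  rw [sum8 (fun y => ψ y * e8 (t * y)), h0, h1, h2, h3, h4, h5, h6, mul_one t]
  ring

lemma hrz : jr * jzeta = 1 + I := by
  rw [jzeta]
  field_simp [jrt2_ne]

lemma hA : jzeta - jzeta^3 = jr := by
  have h3 : jzeta^3 = I * jzeta := by rw [← jzeta_sq]; ring
  apply mul_left_cancel₀ jrt2_ne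
  rw [h3]
  linear_combination (1 - I) * hrz - jrt2_sq - I_sq

lemma hB : jzeta + jzeta^3 = jr * I := by
  have h3 : jzeta^3 = I * jzeta := by rw [← jzeta_sq]; ring
  apply mul_left_cancel₀ jrt2_ne
  rw [h3]
  linear_combination (1 + I) * hrz - I * jrt2_sq + I_sq


lemma jmain {k : ℕ} (hk : 2 ≤ k) (χ : Fin k → DirichletCharacter ℂ 8)
    (h5 : ∀ i, χ i 5 = -1) (hoddk : Odd k)
    (ℓ : ℕ) (hℓ : ℓ = Nat.card {i : Fin k // χ i 7 = -1}) :
    Jsum χ 1 = (Real.sqrt 2 : ℂ) ^ (3 * (k - 1)) * (-1 : ℂ) ^ (ℓ / 2) := by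
  classical
  show Jsum χ 1 = jr ^ (3 * (k - 1)) * (-1 : ℂ) ^ (ℓ / 2)
  have h7sq : ∀ i, χ i 7 * χ i 7 = 1 := fun i => by
    rw [← map_mul, show ((7:ZMod 8)*7) = 1 from by decide, map_one]
  have h7or : ∀ i, χ i 7 = 1 ∨ χ i 7 = -1 := fun i => mul_self_eq_one_iff.mp (h7sq i)
  have hcard : (univ.filter (fun i => χ i 7 = -1)).card = ℓ := by
    rw [hℓ, Nat.card_eq_fintype_card, Fintype.card_subtype]
  set m := (univ.filter (fun i => ¬ χ i 7 = -1)).card with hm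
  have hmk : ℓ + m = k := by
    rw [← hcard, hm, Finset.card_filter_add_card_filter_not, card_univ,
      Fintype.card_fin]
  have hsplit : ∀ c d : ℂ, (∏ i, (c + χ i 7 * d)) = (c + d) ^ m * (c - d) ^ ℓ := by
    intro c d
    rw [← Finset.prod_filter_mul_prod_filter_not univ (fun i => χ i 7 = -1)
      (fun i => c + χ i 7 * d)]
    have e1 : (∏ i ∈ univ.filter (fun i => χ i 7 = -1), (c + χ i 7 * d)) = (c - d) ^ ℓ := by
      have hv : ∀ i ∈ univ.filter (fun i => χ i 7 = -1), c + χ i 7 * d = c - d := fun i hi => by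
        rw [(Finset.mem_filter.mp hi).2]; ring
      rw [Finset.prod_congr rfl hv, Finset.prod_const, hcard]
    have e2 : (∏ i ∈ univ.filter (fun i => ¬ χ i 7 = -1), (c + χ i 7 * d)) = (c + d) ^ m := by
      have hv : ∀ i ∈ univ.filter (fun i => ¬ χ i 7 = -1), c + χ i 7 * d = c + d := fun i hi => by
        rw [(h7or i).resolve_right (Finset.mem_filter.mp hi).2]; ring
      rw [Finset.prod_congr rfl hv, Finset.prod_const]
    rw [e1, e2, mul_comm]
  have expand : ∀ t : ZMod 8,
      e8 (t * 7) * ∏ i, (∑ y : ZMod 8, χ i y * e8 (t * y))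
        = ∑ x : Fin k → ZMod 8, (∏ i, χ i (x i)) * e8 (t * ((∑ i, x i) - 1)) := by
    intro t
    rw [Finset.prod_univ_sum, Fintype.piFinset_univ, Finset.mul_sum]
    refine Finset.sum_congr rfl fun x _ => ?_
    rw [Finset.prod_mul_distrib]
    have h1 : (∏ i, e8 (t * x i)) = e8 (t * ∑ i, x i) := by
      rw [Finset.mul_sum, e8_finsetSum]
    have h2 : t * ((∑ i, x i) - 1) = t * (∑ i, x i) + t * 7 := by
      rw [show (7 : ZMod 8) = -1 from by decide]; ring
    rw [h1, h2, e8_add]; ring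
  have Hmain : ∑ t : ZMod 8, (e8 (t * 7) * ∏ i, (∑ y : ZMod 8, χ i y * e8 (t * y)))
      = (8:ℂ) * Jsum χ 1 := by
    calc ∑ t : ZMod 8, (e8 (t * 7) * ∏ i, (∑ y : ZMod 8, χ i y * e8 (t * y)))
        = ∑ t : ZMod 8, ∑ x : Fin k → ZMod 8,
            (∏ i, χ i (x i)) * e8 (t * ((∑ i, x i) - 1)) :=
          Finset.sum_congr rfl fun t _ => expand t
      _ = ∑ x : Fin k → ZMod 8, ∑ t : ZMod 8,
            (∏ i, χ i (x i)) * e8 (t * ((∑ i, x i) - 1)) := Finset.sum_comm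
      _ = ∑ x : Fin k → ZMod 8,
            (∏ i, χ i (x i)) * (if ((∑ i, x i) - 1) = 0 then 8 else 0) :=
          Finset.sum_congr rfl fun x _ => by rw [← Finset.mul_sum, orth]
      _ = (8:ℂ) * Jsum χ 1 := by
          rw [Jsum, Finset.mul_sum]
          refine Finset.sum_congr rfl fun x _ => ?_
          rcases eq_or_ne (∑ i, x i) 1 with h|h
          · rw [if_pos (by rw [h]; ring), if_pos h]; ring
          · rw [if_neg (fun hc => h (sub_eq_zero.mp hc)), if_neg h]
            ring
  have Gt : ∀ t : ZMod 8, (∏ i, (∑ y : ZMod 8, χ i y * e8 (t * y)))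
      = ∏ i, (e8 t - χ i 7 * e8 (t*3) - e8 (t*5) + χ i 7 * e8 (t*7)) :=
    fun t => Finset.prod_congr rfl fun i _ => Gexp (χ i) (h5 i) t
  have i0 : Fin k := ⟨0, by omega⟩
  have hzero : ∀ t : ZMod 8,
      (e8 t - χ i0 7 * e8 (t*3) - e8 (t*5) + χ i0 7 * e8 (t*7)) = 0 →
      e8 (t * 7) * ∏ i, (∑ y : ZMod 8, χ i y * e8 (t * y)) = 0 := by
    intro t ht
    rw [Gt t, Finset.prod_eq_zero (Finset.mem_univ i0) ht, mul_zero]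
  have hT0 : e8 ((0:ZMod 8) * 7) * ∏ i, (∑ y : ZMod 8, χ i y * e8 ((0:ZMod 8) * y)) = 0 :=
    hzero 0 (by show jzeta^0 - χ i0 7 * jzeta^0 - jzeta^0 + χ i0 7 * jzeta^0 = 0; ring)
  have hT2 : e8 ((2:ZMod 8) * 7) * ∏ i, (∑ y : ZMod 8, χ i y * e8 ((2:ZMod 8) * y)) = 0 :=
    hzero 2 (by show jzeta^2 - χ i0 7 * jzeta^6 - jzeta^2 + χ i0 7 * jzeta^6 = 0; ring)
  have hT4 : e8 ((4:ZMod 8) * 7) * ∏ i, (∑ y : ZMod 8, χ i y * e8 ((4:ZMod 8) * y)) = 0 :=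
    hzero 4 (by show jzeta^4 - χ i0 7 * jzeta^4 - jzeta^4 + χ i0 7 * jzeta^4 = 0; ring)
  have hT6 : e8 ((6:ZMod 8) * 7) * ∏ i, (∑ y : ZMod 8, χ i y * e8 ((6:ZMod 8) * y)) = 0 :=
    hzero 6 (by show jzeta^6 - χ i0 7 * jzeta^2 - jzeta^6 + χ i0 7 * jzeta^2 = 0; ring)
  have hT1 : e8 ((1:ZMod 8) * 7) * ∏ i, (∑ y : ZMod 8, χ i y * e8 ((1:ZMod 8) * y))
      = jzeta^7 * ((jr^3)^m * (jr^3*I)^ℓ) := by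
    have hv : ∀ i ∈ (univ : Finset (Fin k)),
        (e8 (1:ZMod 8) - χ i 7 * e8 ((1:ZMod 8)*3) - e8 ((1:ZMod 8)*5) + χ i 7 * e8 ((1:ZMod 8)*7))
          = 2*jzeta + χ i 7 * (-(2*jzeta^3)) := fun i _ => by
      show jzeta^1 - χ i 7 * jzeta^3 - jzeta^5 + χ i 7 * jzeta^7 = _
      linear_combination (-jzeta + χ i 7 * jzeta^3) * jzeta4
    rw [Gt 1, Finset.prod_congr rfl hv, hsplit,
      show (2*jzeta + -(2*jzeta^3)) = jr^3 from by linear_combination 2*hA - jr*jrt2_sq,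
      show (2*jzeta - -(2*jzeta^3)) = jr^3*I from by linear_combination 2*hB - (jr*I)*jrt2_sq]
    rfl
  have hT3 : e8 ((3:ZMod 8) * 7) * ∏ i, (∑ y : ZMod 8, χ i y * e8 ((3:ZMod 8) * y))
      = jzeta^5 * ((-(jr^3))^m * (jr^3*I)^ℓ) := by
    have hv : ∀ i ∈ (univ : Finset (Fin k)),
        (e8 (3:ZMod 8) - χ i 7 * e8 ((3:ZMod 8)*3) - e8 ((3:ZMod 8)*5) + χ i 7 * e8 ((3:ZMod 8)*7))
          = 2*jzeta^3 + χ i 7 * (-(2*jzeta)) := fun i _ => by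
      show jzeta^3 - χ i 7 * jzeta^1 - jzeta^7 + χ i 7 * jzeta^5 = _
      linear_combination (-jzeta^3 + χ i 7 * jzeta) * jzeta4
    rw [Gt 3, Finset.prod_congr rfl hv, hsplit,
      show (2*jzeta^3 + -(2*jzeta)) = -(jr^3) from by linear_combination (-2)*hA + jr*jrt2_sq,
      show (2*jzeta^3 - -(2*jzeta)) = jr^3*I from by linear_combination 2*hB - (jr*I)*jrt2_sq]
    rfl
  have hT5 : e8 ((5:ZMod 8) * 7) * ∏ i, (∑ y : ZMod 8, χ i y * e8 ((5:ZMod 8) * y))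
      = jzeta^3 * ((-(jr^3))^m * (-(jr^3*I))^ℓ) := by
    have hv : ∀ i ∈ (univ : Finset (Fin k)),
        (e8 (5:ZMod 8) - χ i 7 * e8 ((5:ZMod 8)*3) - e8 ((5:ZMod 8)*5) + χ i 7 * e8 ((5:ZMod 8)*7))
          = -(2*jzeta) + χ i 7 * (2*jzeta^3) := fun i _ => by
      show jzeta^5 - χ i 7 * jzeta^7 - jzeta^1 + χ i 7 * jzeta^3 = _
      linear_combination (jzeta - χ i 7 * jzeta^3) * jzeta4
    rw [Gt 5, Finset.prod_congr rfl hv, hsplit,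
      show (-(2*jzeta) + 2*jzeta^3) = -(jr^3) from by linear_combination (-2)*hA + jr*jrt2_sq,
      show (-(2*jzeta) - 2*jzeta^3) = -(jr^3*I) from by linear_combination (-2)*hB + (jr*I)*jrt2_sq]
    rfl
  have hT7 : e8 ((7:ZMod 8) * 7) * ∏ i, (∑ y : ZMod 8, χ i y * e8 ((7:ZMod 8) * y))
      = jzeta^1 * ((jr^3)^m * (-(jr^3*I))^ℓ) := by
    have hv : ∀ i ∈ (univ : Finset (Fin k)),
        (e8 (7:ZMod 8) - χ i 7 * e8 ((7:ZMod 8)*3) - e8 ((7:ZMod 8)*5) + χ i 7 * e8 ((7:ZMod 8)*7))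
          = -(2*jzeta^3) + χ i 7 * (2*jzeta) := fun i _ => by
      show jzeta^7 - χ i 7 * jzeta^5 - jzeta^3 + χ i 7 * jzeta^1 = _
      linear_combination (jzeta^3 - χ i 7 * jzeta) * jzeta4
    rw [Gt 7, Finset.prod_congr rfl hv, hsplit,
      show (-(2*jzeta^3) + 2*jzeta) = jr^3 from by linear_combination 2*hA - jr*jrt2_sq,
      show (-(2*jzeta^3) - 2*jzeta) = -(jr^3*I) from by linear_combination (-2)*hB + (jr*I)*jrt2_sq]
    rfl
  have Hbig : (8:ℂ) * Jsum χ 1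
      = jzeta^7 * ((jr^3)^m * (jr^3*I)^ℓ)
      + jzeta^5 * ((-(jr^3))^m * (jr^3*I)^ℓ)
      + jzeta^3 * ((-(jr^3))^m * (-(jr^3*I))^ℓ)
      + jzeta^1 * ((jr^3)^m * (-(jr^3*I))^ℓ) := by
    rw [← Hmain, sum8 (fun t => e8 (t*7) * ∏ i, (∑ y : ZMod 8, χ i y * e8 (t * y)))]
    linear_combination hT0 + hT1 + hT2 + hT3 + hT4 + hT5 + hT6 + hT7
  have hpm : ((-(jr^3)) : ℂ)^m = (-1)^m * (jr^3)^m := neg_pow _ m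
  have hpl : ((-(jr^3*I)) : ℂ)^ℓ = (-1)^ℓ * (jr^3*I)^ℓ := neg_pow _ ℓ
  have hsplitI : ((jr^3*I) : ℂ)^ℓ = (jr^3)^ℓ * I^ℓ := mul_pow _ _ ℓ
  have hrr : ((jr^3)^m : ℂ) * (jr^3)^ℓ = jr^(3*(k-1)) * jr^3 := by
    rw [← pow_mul, ← pow_mul, ← pow_add, ← pow_add]
    congr 1
    omega
  apply mul_left_cancel₀ (show (8:ℂ) ≠ 0 by norm_num)
  rw [Hbig, hpm, hpl, hsplitI]
  rcases Nat.even_or_odd ℓ with hpar|hpar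
  · obtain ⟨u, hu⟩ := hpar
    have hmodd : (-1:ℂ)^m = -1 := Odd.neg_one_pow (by
      rcases hoddk with ⟨K,hK⟩
      exact Nat.odd_iff.mpr (by omega))
    have hleven : (-1:ℂ)^ℓ = 1 := Even.neg_one_pow ⟨u, hu⟩
    have hI : (I:ℂ)^ℓ = (-1)^u := by rw [hu, pow_add, ← mul_pow, I_mul_I]
    have hdiv : ℓ / 2 = u := by omega
    rw [hmodd, hleven, hI, hdiv]
    have hfin : jr^3 * (jzeta^7 - jzeta^5 - jzeta^3 + jzeta) = 8 := by
      linear_combination (2*jr^3)*hA + (jr^3*(jzeta^3 - jzeta))*jzeta4 + (2*jr^2+4)*jrt2_sq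
    linear_combination ((jzeta^7 - jzeta^5 - jzeta^3 + jzeta) * (-1:ℂ)^u) * hrr
      + (jr^(3*(k-1)) * (-1:ℂ)^u) * hfin
  · obtain ⟨u, hu⟩ := hpar
    have hmeven : (-1:ℂ)^m = 1 := Even.neg_one_pow (by
      rcases hoddk with ⟨K,hK⟩
      refine Nat.even_iff.mpr (by omega))
    have hlodd : (-1:ℂ)^ℓ = -1 := Odd.neg_one_pow ⟨u, hu⟩
    have hI : (I:ℂ)^ℓ = (-1)^u * I := by rw [hu, pow_succ, pow_mul, I_sq]
    have hdiv : ℓ / 2 = u := by omega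
    rw [hmeven, hlodd, hI, hdiv]
    have hfin2 : jr^3 * (I*(jzeta^7 + jzeta^5 - jzeta^3 - jzeta)) = 8 := by
      linear_combination (jr^3*I*(jzeta^3+jzeta))*jzeta4 + (-2*jr^3*I)*hB
        + (-2*jr^4)*I_sq + (2*jr^2+4)*jrt2_sq
    linear_combination ((I*(jzeta^7 + jzeta^5 - jzeta^3 - jzeta)) * (-1:ℂ)^u) * hrr
      + (jr^(3*(k-1)) * (-1:ℂ)^u) * hfin2

lemma cast41 : ∀ a : ZMod 8, ZMod.castHom (by norm_num : (4:ℕ) ∣ 8) (ZMod 4) a = 1 → a = 1 ∨ a = 5 := by decide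

lemma hval5 (ψ : DirichletCharacter ℂ 8) (hp : ψ.IsPrimitive) : ψ 5 = -1 := by
  have hsq : ψ 5 * ψ 5 = 1 := by
    rw [← map_mul, show ((5:ZMod 8) * 5) = 1 from by decide, map_one]
  rcases mul_self_eq_one_iff.mp hsq with h | h
  swap
  · exact h
  exfalso
  have hd : (4:ℕ) ∣ 8 := by norm_num
  have hft : ψ.FactorsThrough 4 := by
    rw [DirichletCharacter.factorsThrough_iff_ker_unitsMap hd]
    intro x hx
    rw [MonoidHom.mem_ker] at hx ⊢
    have hx' : ZMod.castHom hd (ZMod 4) (x : ZMod 8) = 1 := by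
      have := congrArg Units.val hx
      simpa [ZMod.unitsMap] using this
    have ha : (x : ZMod 8) = 1 ∨ (x : ZMod 8) = 5 := cast41 _ hx'
    have hv : ψ (x : ZMod 8) = 1 := by
      rcases ha with h1|h1 <;> rw [h1]
      · exact map_one ψ
      · exact h
    exact Units.ext (by simpa [MulChar.coe_toUnitHom] using hv)
  have hle : ψ.conductor ≤ 4 := Nat.sInf_le hft
  rw [DirichletCharacter.IsPrimitive] at hp
  omega


end JacobiAux

open Finset in
theorem stmt5 {k : ℕ} (hk : 2 ≤ k)
    (χ : Fin k → DirichletCharacter ℂ (2 ^ 3))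
    (hprim : ∀ i, (χ i).IsPrimitive)
    (hprodprim : (∏ i, χ i).IsPrimitive)
    -- ℓ is the number of indices with χ_i(-1) = -1
    (ℓ : ℕ) (hℓ : ℓ = Nat.card {i : Fin k // χ i (-1) = -1}) :
    Jsum χ (1 : ZMod (2 ^ 3)) =
      (Real.sqrt 2 : ℂ) ^ (3 * (k - 1)) * (-1 : ℂ) ^ (ℓ / 2) := by
  have χ' : Fin k → DirichletCharacter ℂ 8 := χ
  have h5 : ∀ i, (χ i) (5 : ZMod 8) = -1 := fun i => hval5 (χ i) (hprim i)
  have hp5 : (∏ i, χ i) (5 : ZMod 8) = -1 := hval5 (∏ i, χ i) hprodprim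
  let E : DirichletCharacter ℂ 8 →* ℂ :=
    { toFun := fun ψ => ψ 5,
      map_one' := MulChar.one_apply (by decide : IsUnit (5 : ZMod 8)),
      map_mul' := fun ψ φ => MulChar.mul_apply ψ φ 5 }
  have hpe : (∏ i, χ i) (5 : ZMod 8) = ∏ i, (χ i) (5 : ZMod 8) := map_prod E χ univ
  have hprodval : (∏ i, (χ i) (5 : ZMod 8)) = (-1 : ℂ)^k := by
    rw [Finset.prod_congr rfl (fun i _ => h5 i), Finset.prod_const,
      Finset.card_univ, Fintype.card_fin]
  have hpow : (-1 : ℂ)^k = -1 := by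
    rw [← hprodval, ← hpe]
    exact hp5
  have hoddk : Odd k := by
    rcases Nat.even_or_odd k with he|ho
    · exfalso
      rw [he.neg_one_pow] at hpow
      norm_num at hpow
    · exact ho
  have hℓ' : ℓ = Nat.card {i : Fin k // (χ i) (7 : ZMod 8) = -1} := by
    rw [hℓ]
    congr 1
  exact jmain hk χ h5 hoddk ℓ hℓ'
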